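/- Let $\mathcal{G} = \mathfrak{sl}_n(\mathbb{C}) \otimes \mathbb{C}[\lambda,\lambda^{-1}]$ with the form $\langle x\otimes\lambda^j, y\otimes\lambda^k\rangle = \mathrm{tr}(xy)\,\delta_{j,-k}$, and let $n_+ = (\bar{n}_+ \otimes 1) \oplus (\mathfrak{sl}_n \otimes \lambda\mathbb{C}[\lambda])$, where $\bar{n}_+$ is the strictly upper triangular matrices. Let $I = \sum_{i=1}^{n-1} f_i + \bar{e}_0 \otimes \lambda^{-1}$, where $f_i = E_{i+1,i}$ and $\bar{e}_0 = E_{1,n}$. Then $\langle I, [X, Y]\rangle = 0$ for all $X, Y \in n_+$. -/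

import Mathlib

open LaurentPolynomial

/-- The Toda moment value `I = Σ_{i=1}^{n-1} E_{i+1,i} + λ⁻¹ E_{1,n}` in the loop algebra of
`𝔰𝔩_n(ℂ)` (realized as traceless `n × n` matrices over Laurent polynomials). -/
noncomputable def todaMoment (n : ℕ) : Matrix (Fin n) (Fin n) ℂ[T;T⁻¹] :=
  Matrix.of fun i j =>
    if (i : ℕ) = (j : ℕ) + 1 then 1
    else if (i : ℕ) = 0 ∧ (j : ℕ) = n - 1 then T (-1)
    else 0

/-- General coefficient formula for products of Laurent polynomials. -/
theorem toda_aux_coeff_mul_gen (p q : ℂ[T;T⁻¹]) (x : ℤ) :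
    (p * q).coeff x = ∑ a ∈ p.coeff.support, p.coeff a * q.coeff (x - a) := by
  classical
  rw [AddMonoidAlgebra.coeff_mul, Finsupp.sum]
  apply Finset.sum_congr rfl
  intro a _
  rw [Finsupp.sum, Finset.sum_eq_single (x - a)]
  · simp
  · intro b _ hb; have : a + b ≠ x := by omega
    simp [this]
  · intro h; simp [Finsupp.notMem_support_iff.mp h]

theorem toda_aux_coeff_zero (p q : ℂ[T;T⁻¹]) (hp : ∀ k : ℤ, k < 0 → p.coeff k = 0)
    (hq : ∀ k : ℤ, k < 0 → q.coeff k = 0) :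
    (p * q).coeff 0 = p.coeff 0 * q.coeff 0 := by
  classical
  rw [toda_aux_coeff_mul_gen, Finset.sum_eq_single (0 : ℤ)]
  · norm_num
  · intro a ha ha0
    rcases lt_or_ge a 0 with h | h
    · rw [hp a h, zero_mul]
    · have : (0 : ℤ) - a < 0 := by omega
      rw [hq _ this, mul_zero]
  · intro h; rw [Finsupp.notMem_support_iff.mp h, zero_mul]

theorem toda_aux_coeff_one (p q : ℂ[T;T⁻¹]) (hp : ∀ k : ℤ, k < 0 → p.coeff k = 0)
    (hq : ∀ k : ℤ, k < 0 → q.coeff k = 0) :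
    (p * q).coeff 1 = p.coeff 0 * q.coeff 1 + p.coeff 1 * q.coeff 0 := by
  classical
  rw [toda_aux_coeff_mul_gen]
  have hvan : ∀ a : ℤ, a ∉ ({0, 1} : Finset ℤ) → p.coeff a * q.coeff (1 - a) = 0 := by
    intro a ha
    simp only [Finset.mem_insert, Finset.mem_singleton] at ha
    push_neg at ha
    rcases lt_or_ge a 0 with h | h
    · rw [hp a h, zero_mul]
    · have : (1 : ℤ) - a < 0 := by omega
      rw [hq _ this, mul_zero]
  have h1 : ∑ a ∈ p.coeff.support, p.coeff a * q.coeff (1 - a)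
      = ∑ a ∈ p.coeff.support ∪ {0, 1}, p.coeff a * q.coeff (1 - a) := by
    apply Finset.sum_subset Finset.subset_union_left
    intro a _ ha
    rw [Finsupp.notMem_support_iff.mp ha, zero_mul]
  have h2 : ∑ a ∈ p.coeff.support ∪ {0, 1}, p.coeff a * q.coeff (1 - a)
      = ∑ a ∈ ({0, 1} : Finset ℤ), p.coeff a * q.coeff (1 - a) := by
    symm
    apply Finset.sum_subset Finset.subset_union_right
    intro a _ ha
    exact hvan a ha
  rw [h1, h2, Finset.sum_insert (by norm_num), Finset.sum_singleton]
  norm_num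

/-- Constant coefficient of a product entry just above the diagonal vanishes. -/
theorem toda_aux_entry_zero {n : ℕ} (A B : Matrix (Fin n) (Fin n) ℂ[T;T⁻¹])
    (hApos : ∀ (i j : Fin n) (k : ℤ), k < 0 → (A i j).coeff k = 0)
    (hBpos : ∀ (i j : Fin n) (k : ℤ), k < 0 → (B i j).coeff k = 0)
    (hA0 : ∀ i j : Fin n, j ≤ i → (A i j).coeff 0 = 0)
    (hB0 : ∀ i j : Fin n, j ≤ i → (B i j).coeff 0 = 0)
    (c a : Fin n) (hca : (a : ℕ) = (c : ℕ) + 1) :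
    ((A * B) c a).coeff 0 = 0 := by
  rw [Matrix.mul_apply, AddMonoidAlgebra.coeff_sum, Finsupp.finset_sum_apply]
  apply Finset.sum_eq_zero
  intro k _
  rw [toda_aux_coeff_zero _ _ (hApos c k) (hBpos k a)]
  rcases le_or_gt (k : ℕ) (c : ℕ) with h | h
  · rw [hA0 c k (by exact h), zero_mul]
  · rw [hB0 k a (by rw [Fin.le_def]; omega), mul_zero]

/-- Degree-one coefficient of the bottom-left corner of a product vanishes. -/
theorem toda_aux_entry_one {n : ℕ} (A B : Matrix (Fin n) (Fin n) ℂ[T;T⁻¹])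
    (hApos : ∀ (i j : Fin n) (k : ℤ), k < 0 → (A i j).coeff k = 0)
    (hBpos : ∀ (i j : Fin n) (k : ℤ), k < 0 → (B i j).coeff k = 0)
    (hA0 : ∀ i j : Fin n, j ≤ i → (A i j).coeff 0 = 0)
    (hB0 : ∀ i j : Fin n, j ≤ i → (B i j).coeff 0 = 0)
    (c a : Fin n) (hc : (c : ℕ) = n - 1) (ha : (a : ℕ) = 0) :
    ((A * B) c a).coeff 1 = 0 := by
  rw [Matrix.mul_apply, AddMonoidAlgebra.coeff_sum, Finsupp.finset_sum_apply]
  apply Finset.sum_eq_zero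
  intro k _
  rw [toda_aux_coeff_one _ _ (hApos c k) (hBpos k a)]
  have hk : (k : ℕ) ≤ (c : ℕ) := by have := k.isLt; omega
  rw [hA0 c k (by exact hk), hB0 k a (by rw [Fin.le_def]; omega), zero_mul, mul_zero,
    zero_add]

/-- Lemma 3 of the paper for `𝔰𝔩_n`: the moment value `I` vanishes on `[n₊, n₊]` under the
pairing `⟨A,B⟩ = (tr(AB))₀` (constant Laurent coefficient of the trace).  Here `X ∈ n₊`
means: `X` is a traceless matrix of Laurent polynomials all of whose coefficients in
negative degrees vanish and whose constant term is strictly upper triangular. -/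
theorem toda_moment_isotropic_on_nplus (n : ℕ) (hn : 2 ≤ n)
    (X Y : Matrix (Fin n) (Fin n) ℂ[T;T⁻¹])
    (hXsl : Matrix.trace X = 0) (hYsl : Matrix.trace Y = 0)
    (hXpos : ∀ (i j : Fin n) (k : ℤ), k < 0 → (X i j).coeff k = 0)
    (hYpos : ∀ (i j : Fin n) (k : ℤ), k < 0 → (Y i j).coeff k = 0)
    (hX0 : ∀ i j : Fin n, j ≤ i → (X i j).coeff 0 = 0)
    (hY0 : ∀ i j : Fin n, j ≤ i → (Y i j).coeff 0 = 0) :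
    (Matrix.trace (todaMoment n * (X * Y - Y * X))).coeff 0 = 0 := by
  classical
  simp only [Matrix.trace]
  simp only [Matrix.diag_apply, Matrix.mul_apply]
  rw [AddMonoidAlgebra.coeff_sum, Finsupp.finset_sum_apply]
  apply Finset.sum_eq_zero
  intro a _
  rw [AddMonoidAlgebra.coeff_sum, Finsupp.finset_sum_apply]
  apply Finset.sum_eq_zero
  intro c _
  simp only [todaMoment, Matrix.of_apply]
  split_ifs with h1 h2
  · -- I a c = 1
    rw [one_mul, Matrix.sub_apply, AddMonoidAlgebra.coeff_sub, Finsupp.sub_apply,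
      toda_aux_entry_zero X Y hXpos hYpos hX0 hY0 c a h1,
      toda_aux_entry_zero Y X hYpos hXpos hY0 hX0 c a h1, sub_zero]
  · -- I a c = T (-1)
    rw [LaurentPolynomial.T,
      AddMonoidAlgebra.coeff_single_mul_eq_mul_coeff 1 (by intro b _; omega),
      Matrix.sub_apply, AddMonoidAlgebra.coeff_sub, Finsupp.sub_apply,
      toda_aux_entry_one X Y hXpos hYpos hX0 hY0 c a h2.2 h2.1,
      toda_aux_entry_one Y X hYpos hXpos hY0 hX0 c a h2.2 h2.1, sub_zero, mul_zero]
  · rw [zero_mul, AddMonoidAlgebra.coeff_zero, Finsupp.zero_apply]
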